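/- arXiv:1806.08693 — 4 statements merged into one kernel-verified Lean document; each statement's English description precedes it below -/
import Mathlib

section
/- Let s ≥ 1, let A ∈ ℝ^{s×s} be strictly lower triangular and b ∈ ℝ^s, and let K = [[A, 0], [bᵀ, 0]] ∈ ℝ^{(s+1)×(s+1)}, which is strictly lower triangular and hence nilpotent, so that I + rK is invertible for every real r. If there exists r₀ > 0 such that for every r ∈ (0, r₀] all entries of the matrix K(I + rK)^{-1} are nonnegative, then every entry of A and every entry of b is nonnegative. -/
open Matrix

/-- The matrix `K = [[A, 0], [bᵀ, 0]] ∈ ℝ^{(s+1)×(s+1)}` built from an `s × s`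
coefficient matrix `A` and a weight vector `b ∈ ℝ^s`. -/
def mkK {s : ℕ} (A : Matrix (Fin s) (Fin s) ℝ) (b : Fin s → ℝ) :
    Matrix (Fin (s + 1)) (Fin (s + 1)) ℝ :=
  Matrix.of fun i j =>
    if hj : (j : ℕ) < s then
      if hi : (i : ℕ) < s then A ⟨i, hi⟩ ⟨j, hj⟩ else b ⟨j, hj⟩
    else 0

lemma mkK_lower {s : ℕ} {A : Matrix (Fin s) (Fin s) ℝ} {b : Fin s → ℝ}
    (hA : ∀ i j : Fin s, i ≤ j → A i j = 0)
    {i j : Fin (s + 1)} (hij : (i : ℕ) ≤ (j : ℕ)) : mkK A b i j = 0 := by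
  simp only [mkK, Matrix.of_apply]
  split_ifs with hj hi
  · exact hA _ _ hij
  · omega
  · rfl

lemma mkK_pow_zero {s : ℕ} {A : Matrix (Fin s) (Fin s) ℝ} {b : Fin s → ℝ}
    (hA : ∀ i j : Fin s, i ≤ j → A i j = 0) :
    ∀ m : ℕ, ∀ i j : Fin (s + 1), (i : ℕ) < (j : ℕ) + m → (mkK A b ^ m) i j = 0 := by
  intro m
  induction m with
  | zero =>
    intro i j hij
    rw [pow_zero, Matrix.one_apply_ne]
    intro hh; subst hh; omega
  | succ m ih =>
    intro i j hij
    rw [pow_succ, Matrix.mul_apply]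
    apply Finset.sum_eq_zero
    intro k _
    by_cases hk : (i : ℕ) < (k : ℕ) + m
    · rw [ih i k hk, zero_mul]
    · rw [mkK_lower hA (by omega), mul_zero]

lemma mkK_nilp {s : ℕ} {A : Matrix (Fin s) (Fin s) ℝ} {b : Fin s → ℝ}
    (hA : ∀ i j : Fin s, i ≤ j → A i j = 0) :
    (mkK A b) ^ (s + 1) = 0 := by
  ext i j
  rw [mkK_pow_zero hA (s + 1) i j (by omega)]
  rfl

/-- If an explicit (strictly lower triangular) Runge–Kutta method has
`K(I + rK)⁻¹ ≥ 0` entrywise for all `r` in some interval `(0, r₀]` with `r₀ > 0`,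
then all entries of `A` and `b` are nonnegative. -/
theorem positive_ssp_implies_nonneg_coefficients
    (s : ℕ) (hs : 1 ≤ s)
    (A : Matrix (Fin s) (Fin s) ℝ) (b : Fin s → ℝ)
    (hA : ∀ i j : Fin s, i ≤ j → A i j = 0)
    (h : ∃ r₀ : ℝ, 0 < r₀ ∧ ∀ r : ℝ, 0 < r → r ≤ r₀ →
      ∀ i j : Fin (s + 1), 0 ≤ (mkK A b * (1 + r • mkK A b)⁻¹) i j) :
    (∀ i j : Fin s, 0 ≤ A i j) ∧ (∀ j : Fin s, 0 ≤ b j) := by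
  obtain ⟨r₀, hr₀, hpos⟩ := h
  set K := mkK A b with hK
  -- explicit inverse via the finite geometric series
  have hinv : ∀ r : ℝ,
      (1 + r • K)⁻¹ = ∑ k ∈ Finset.range (s + 1), (-(r • K)) ^ k := by
    intro r
    apply Matrix.inv_eq_right_inv
    have hnil : (-(r • K)) ^ (s + 1) = 0 := by
      rw [neg_pow, smul_pow, mkK_nilp hA]
      simp
    have := mul_geom_sum (-(r • K)) (s + 1)
    rw [hnil, zero_sub] at this
    calc (1 + r • K) * ∑ k ∈ Finset.range (s + 1), (-(r • K)) ^ k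
        = -((-(r • K) - 1) * ∑ k ∈ Finset.range (s + 1), (-(r • K)) ^ k) := by
          rw [← neg_mul, neg_sub, sub_neg_eq_add]
      _ = 1 := by rw [this, neg_neg]
  have key : ∀ i j : Fin (s + 1), 0 ≤ K i j := by
    intro i j
    set f : ℝ → ℝ :=
      fun r => ∑ k ∈ Finset.range (s + 1), (-r) ^ k * (K ^ (k + 1)) i j with hf
    have hfeq : ∀ r : ℝ, (K * (1 + r • K)⁻¹) i j = f r := by
      intro r
      rw [hinv r, Finset.mul_sum, hf]
      rw [Matrix.sum_apply]
      apply Finset.sum_congr rfl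
      intro k _
      have : K * (-(r • K)) ^ k = (-r) ^ k • K ^ (k + 1) := by
        rw [← neg_smul, smul_pow, mul_smul_comm, ← pow_succ']
      rw [this, Matrix.smul_apply, smul_eq_mul]
    have hf0 : f 0 = K i j := by
      simp only [hf]
      rw [Finset.sum_eq_single 0]
      · simp
      · intro k _ hk
        rw [neg_zero, zero_pow hk, zero_mul]
      · simp
    have hcont : Continuous f := by
      apply continuous_finset_sum
      intro k _
      exact (continuous_neg.pow k).mul continuous_const
    have htend : Filter.Tendsto f (nhdsWithin 0 (Set.Ioi 0)) (nhds (f 0)) :=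
      (hcont.tendsto 0).mono_left nhdsWithin_le_nhds
    rw [← hf0]
    refine ge_of_tendsto htend ?_
    filter_upwards [Ioc_mem_nhdsGT_of_mem (Set.left_mem_Ico.2 hr₀)] with r hr
    rw [← hfeq r]
    exact hpos r hr.1 hr.2 i j
  constructor
  · intro i j
    have := key i.castSucc j.castSucc
    simpa [hK, mkK, i.is_lt, j.is_lt] using this
  · intro j
    have := key (Fin.last s) j.castSucc
    simpa [hK, mkK, j.is_lt] using this
end

section
/- For every integer s ≥ 2, the SSPERK(s,2) method satisfies the SSP conditions at parameter r = s − 1: with K = [[A, 0], [bᵀ, 0]] ∈ ℝ^{(s+1)×(s+1)}, every entry of K(I + (s−1)K)^{-1} is nonnegative and every component of (s−1)·K(I + (s−1)K)^{-1}e is at most 1, where e is the all-ones vector. Hence the SSP coefficient of SSPERK(s,2) is at least s − 1. -/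
open Matrix

/-- Auxiliary matrix: `E i j = 1` if `i = j+1 < s`, `(s-1)/s` if `i = j+1 = s`, else `0`. -/
noncomputable def Emat (s : ℕ) : Matrix (Fin (s + 1)) (Fin (s + 1)) ℝ :=
  Matrix.of fun i j =>
    if (i : ℕ) = (j : ℕ) + 1 then (if (i : ℕ) < s then 1 else ((s : ℝ) - 1) / (s : ℝ)) else 0

/-- The SSPERK(s,2) method (with `a_{ij} = 1/(s-1)` for `j < i`, `b_j = 1/s`)
satisfies the SSP conditions at `r = s - 1`: `K(I + (s-1)K)⁻¹ ≥ 0` entrywise and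
`(s-1)K(I + (s-1)K)⁻¹ e ≤ e` componentwise; hence its SSP coefficient is at least `s - 1`. -/
theorem ssperk_s2_ssp_conditions
    (s : ℕ) (hs : 2 ≤ s)
    (A : Matrix (Fin s) (Fin s) ℝ)
    (hA : ∀ i j : Fin s, A i j = if (j : ℕ) < (i : ℕ) then 1 / ((s : ℝ) - 1) else 0)
    (b : Fin s → ℝ) (hb : ∀ j : Fin s, b j = 1 / (s : ℝ)) :
    (∀ i j : Fin (s + 1),
      0 ≤ (mkK A b * (1 + ((s : ℝ) - 1) • mkK A b)⁻¹) i j) ∧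
    (∀ i : Fin (s + 1),
      (((s : ℝ) - 1) • (mkK A b * (1 + ((s : ℝ) - 1) • mkK A b)⁻¹)).mulVec
        (fun _ => 1) i ≤ 1) := by
  have hsR : (2 : ℝ) ≤ (s : ℝ) := by exact_mod_cast hs
  have hr0 : (0 : ℝ) < (s : ℝ) - 1 := by linarith
  have hrne : ((s : ℝ) - 1) ≠ 0 := ne_of_gt hr0
  have hs0 : (0 : ℝ) < (s : ℝ) := by linarith
  have hsne : ((s : ℝ)) ≠ 0 := ne_of_gt hs0
  -- closed form for K
  have hK : ∀ i j : Fin (s + 1), mkK A b i j =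
      if (j : ℕ) < (i : ℕ) then (if (i : ℕ) < s then 1 / ((s : ℝ) - 1) else 1 / (s : ℝ))
      else 0 := by
    intro i j
    simp only [mkK, Matrix.of_apply]
    by_cases hj : (j : ℕ) < s
    · by_cases hi : (i : ℕ) < s
      · rw [dif_pos hj, dif_pos hi, hA]
        simp [hi]
      · rw [dif_pos hj, dif_neg hi, hb]
        have hji : (j : ℕ) < (i : ℕ) := by omega
        simp [hji, hi]
    · rw [dif_neg hj]
      have hji : ¬ (j : ℕ) < (i : ℕ) := by omega
      simp [hji]
  -- the key identity: (1 + r•K) * E = r•K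
  have hmul : (1 + ((s : ℝ) - 1) • mkK A b) * Emat s = ((s : ℝ) - 1) • mkK A b := by
    ext i j
    rw [Matrix.mul_apply]
    by_cases hj : (j : ℕ) < s
    · rw [Finset.sum_eq_single (⟨(j : ℕ) + 1, by omega⟩ : Fin (s + 1))]
      · simp only [Matrix.add_apply, Matrix.smul_apply, Matrix.one_apply, Emat,
          Matrix.of_apply, hK, smul_eq_mul, if_true]
        have hieq : (i = (⟨(j : ℕ) + 1, by omega⟩ : Fin (s + 1))) ↔ ((i : ℕ) = (j : ℕ) + 1) := by
          constructor
          · intro h; rw [h]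
          · intro h; exact Fin.ext h
        by_cases hi1 : (i : ℕ) = (j : ℕ) + 1
        · rw [if_pos (hieq.mpr hi1)]
          have hji : ¬ ((j : ℕ) + 1) < (i : ℕ) := by omega
          have hji2 : (j : ℕ) < (i : ℕ) := by omega
          rw [if_neg hji]
          rw [if_pos hji2]
          by_cases hi2 : (i : ℕ) < s
          · have : ((j : ℕ) + 1) < s := by omega
            rw [if_pos (by omega), if_pos hi2]
            field_simp
            ring
          · have hi3 : ¬ ((j : ℕ) + 1) < s := by omega
            rw [if_neg (by omega), if_neg hi2]
            field_simp
            ring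
        · rw [if_neg (fun h => hi1 (hieq.mp h))]
          by_cases hji : (j : ℕ) + 1 < (i : ℕ)
          · have hji2 : (j : ℕ) < (i : ℕ) := by omega
            rw [if_pos hji, if_pos hji2]
            by_cases hi2 : (i : ℕ) < s
            · have hjs2 : (j : ℕ) + 1 < s := by omega
              rw [if_pos hjs2, if_pos hi2]
              field_simp
              ring
            · have hieqs : (i : ℕ) = s := by omega
              by_cases hjs2 : (j : ℕ) + 1 < s
              · rw [if_pos hjs2, if_neg hi2]
                field_simp
                ring
              · omega
          · have hji2 : ¬ (j : ℕ) < (i : ℕ) := by omega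
            rw [if_neg hji, if_neg hji2]
            ring
      · intro k _ hk
        have hkv : ¬ (k : ℕ) = (j : ℕ) + 1 := by
          intro h
          exact hk (Fin.ext h)
        simp [Emat, hkv]
      · intro h; exact absurd (Finset.mem_univ _) h
    · have hjs : (j : ℕ) = s := by omega
      have h0 : ∀ k ∈ (Finset.univ : Finset (Fin (s + 1))),
          (1 + ((s : ℝ) - 1) • mkK A b) i k * Emat s k j = 0 := by
        intro k _
        have hkv : ¬ (k : ℕ) = (j : ℕ) + 1 := by omega
        simp [Emat, hkv]
      rw [Finset.sum_eq_zero h0]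
      have hji : ¬ (j : ℕ) < (i : ℕ) := by omega
      simp [hK, hji]
  -- the inverse
  have hinv : (1 + ((s : ℝ) - 1) • mkK A b)⁻¹ = 1 - Emat s := by
    apply Matrix.inv_eq_right_inv
    rw [mul_sub, mul_one, hmul, add_sub_cancel_right]
  -- K * E = K - r⁻¹ • E
  have hKE : mkK A b * Emat s = mkK A b - ((s : ℝ) - 1)⁻¹ • Emat s := by
    have h1 := hmul
    rw [add_mul, one_mul, Matrix.smul_mul] at h1
    have h2 : ((s : ℝ) - 1) • (mkK A b * Emat s) = ((s : ℝ) - 1) • mkK A b - Emat s := by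
      rw [← h1]; abel
    have h3 := congrArg (fun M => ((s : ℝ) - 1)⁻¹ • M) h2
    simp only [smul_smul, inv_mul_cancel₀ hrne, one_smul, smul_sub] at h3
    exact h3
  -- closed form for the product
  have hM : mkK A b * (1 + ((s : ℝ) - 1) • mkK A b)⁻¹ = ((s : ℝ) - 1)⁻¹ • Emat s := by
    rw [hinv, mul_sub, mul_one, hKE]
    abel
  constructor
  · intro i j
    rw [hM]
    simp only [Matrix.smul_apply, Emat, Matrix.of_apply, smul_eq_mul]
    split_ifs
    · positivity
    · have : (0 : ℝ) ≤ ((s : ℝ) - 1) / (s : ℝ) := by positivity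
      positivity
    · simp
  · intro i
    rw [hM, smul_smul, mul_inv_cancel₀ hrne, one_smul]
    rw [Matrix.mulVec, dotProduct]
    simp only [mul_one]
    by_cases hi : (i : ℕ) = 0
    · have h0 : ∀ k ∈ (Finset.univ : Finset (Fin (s + 1))), Emat s i k = 0 := by
        intro k _
        have : ¬ (i : ℕ) = (k : ℕ) + 1 := by omega
        simp [Emat, this]
      rw [Finset.sum_eq_zero h0]
      norm_num
    · have hi1 : (i : ℕ) - 1 < s + 1 := by omega
      rw [Finset.sum_eq_single (⟨(i : ℕ) - 1, hi1⟩ : Fin (s + 1))]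
      · have hv : (i : ℕ) = ((⟨(i : ℕ) - 1, hi1⟩ : Fin (s + 1)) : ℕ) + 1 := by
          simp; omega
        simp only [Emat, Matrix.of_apply, if_pos hv]
        split_ifs
        · norm_num
        · rw [div_le_one hs0]; linarith
      · intro k _ hk
        have hkv : ¬ (i : ℕ) = (k : ℕ) + 1 := by
          intro h
          exact hk (Fin.ext (show (k : ℕ) = (i : ℕ) - 1 by omega))
        simp [Emat, hkv]
      · intro h; exact absurd (Finset.mem_univ _) h
end

section
/- For every integer s ≥ 2, the embedded weight vector b̃₂ = ((s+1)/s², 1/s, …, 1/s, (s−1)/s²)ᵀ ∈ ℝ^s (first entry (s+1)/s², entries 2 through s−1 equal 1/s, last entry (s−1)/s²), paired with the SSPERK(s,2) abscissae c_j = (j−1)/(s−1), satisfies the first-order condition Σ_{j=1}^{s} (b̃₂)_j = 1 but violates the second-order condition: Σ_{j=1}^{s} (b̃₂)_j c_j = (s²−2)/(2s²) ≠ 1/2. Hence b̃₂ is a non-defective first-order embedded method for SSPERK(s,2). -/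
/-- The embedded weight vector `b̃₂ = ((s+1)/s², 1/s, …, 1/s, (s-1)/s²)ᵀ` for
SSPERK(s,2), with abscissae `c j = j/(s-1)` (zero-indexed), satisfies the
first-order condition `b̃₂ᵀe = 1` but violates the second-order condition:
`b̃₂ᵀc = (s²-2)/(2s²) ≠ 1/2`. -/
theorem ssperk_s2_embedded_b2_nondefective_first_order
    (s : ℕ) (hs : 2 ≤ s)
    (bt : Fin s → ℝ)
    (hbt : ∀ j : Fin s, bt j =
      if (j : ℕ) = 0 then ((s : ℝ) + 1) / (s : ℝ) ^ 2
      else if (j : ℕ) = s - 1 then ((s : ℝ) - 1) / (s : ℝ) ^ 2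
      else 1 / (s : ℝ))
    (c : Fin s → ℝ) (hc : ∀ j : Fin s, c j = (j : ℝ) / ((s : ℝ) - 1)) :
    (∑ j : Fin s, bt j = 1) ∧
    (∑ j : Fin s, bt j * c j = ((s : ℝ) ^ 2 - 2) / (2 * (s : ℝ) ^ 2)) ∧
    ((s : ℝ) ^ 2 - 2) / (2 * (s : ℝ) ^ 2) ≠ 1 / 2 := by
  have hs2 : (2 : ℝ) ≤ (s : ℝ) := by exact_mod_cast hs
  have hs0 : (s : ℝ) ≠ 0 := by linarith
  have hs1 : (s : ℝ) - 1 ≠ 0 := by linarith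
  have hne : s - 1 ≠ 0 := by omega
  set a : Fin s := ⟨0, by omega⟩ with ha
  set b : Fin s := ⟨s - 1, by omega⟩ with hb
  have hab : a ≠ b := by
    intro h
    have := congrArg (Fin.val) h
    simp [ha, hb] at this
    omega
  -- pointwise decomposition of bt
  have hsplit : ∀ j : Fin s, bt j = 1 / (s : ℝ) +
      ((if j = a then 1 / (s : ℝ) ^ 2 else 0) +
       (if j = b then -(1 / (s : ℝ) ^ 2) else 0)) := by
    intro j
    rw [hbt j]
    have haj : (j = a) ↔ ((j : ℕ) = 0) := by
      constructor
      · intro h; rw [h]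
      · intro h; apply Fin.ext; simpa using h
    have hbj : (j = b) ↔ ((j : ℕ) = s - 1) := by
      constructor
      · intro h; rw [h]
      · intro h; apply Fin.ext; simpa [hb] using h
    by_cases h0 : (j : ℕ) = 0
    · have h1 : ¬ ((j : ℕ) = s - 1) := by omega
      rw [if_pos h0, if_pos (haj.mpr h0), if_neg (fun h => h1 (hbj.mp h))]
      field_simp
      ring
    · by_cases h1 : (j : ℕ) = s - 1
      · rw [if_neg h0, if_pos h1, if_neg (fun h => h0 (haj.mp h)),
          if_pos (hbj.mpr h1)]
        field_simp
        ring
      · rw [if_neg h0, if_neg h1, if_neg (fun h => h0 (haj.mp h)),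
          if_neg (fun h => h1 (hbj.mp h))]
        ring
  have hsumj : ∑ j : Fin s, (j : ℝ) = (s : ℝ) * ((s : ℝ) - 1) / 2 := by
    rw [Fin.sum_univ_eq_sum_range (fun i => (i : ℝ)) s]
    have := Finset.sum_range_id_mul_two s
    have h2 : ((∑ i ∈ Finset.range s, i : ℕ) : ℝ) * 2 = (s : ℝ) * ((s : ℝ) - 1) := by
      rw [← Nat.cast_ofNat, ← Nat.cast_mul, this]
      have : (s : ℝ) * ((s : ℝ) - 1) = ((s * (s - 1) : ℕ) : ℝ) := by
        push_cast [Nat.cast_sub (by omega : 1 ≤ s)]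
        ring
      rw [this]
    rw [Nat.cast_sum] at h2
    linarith
  -- first sum
  have hS1 : ∑ j : Fin s, bt j = 1 := by
    calc ∑ j : Fin s, bt j
        = ∑ j : Fin s, (1 / (s : ℝ) +
          ((if j = a then 1 / (s : ℝ) ^ 2 else 0) +
           (if j = b then -(1 / (s : ℝ) ^ 2) else 0))) := by
          exact Finset.sum_congr rfl (fun j _ => hsplit j)
      _ = (s : ℝ) * (1 / (s : ℝ)) + (1 / (s : ℝ) ^ 2 + -(1 / (s : ℝ) ^ 2)) := by
          rw [Finset.sum_add_distrib, Finset.sum_add_distrib,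
            Finset.sum_const, Finset.sum_ite_eq' Finset.univ a,
            Finset.sum_ite_eq' Finset.univ b]
          simp [mul_comm]
      _ = 1 := by field_simp; ring
  refine ⟨hS1, ?_, ?_⟩
  · calc ∑ j : Fin s, bt j * c j
        = ∑ j : Fin s, ((1 / (s : ℝ)) * c j +
          ((if j = a then (1 / (s : ℝ) ^ 2) * c a else 0) +
           (if j = b then -((1 / (s : ℝ) ^ 2)) * c b else 0))) := by
          refine Finset.sum_congr rfl (fun j _ => ?_)
          rw [hsplit j]
          by_cases h0 : j = a
          · rw [if_pos h0, if_pos h0, if_neg (h0 ▸ hab), if_neg (h0 ▸ hab), h0]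
            ring
          · by_cases h1 : j = b
            · rw [if_neg h0, if_neg h0, if_pos h1, if_pos h1, h1]
              ring
            · rw [if_neg h0, if_neg h0, if_neg h1, if_neg h1]
              ring
      _ = (1 / (s : ℝ)) * ∑ j : Fin s, c j +
          ((1 / (s : ℝ) ^ 2) * c a + -((1 / (s : ℝ) ^ 2)) * c b) := by
          rw [Finset.sum_add_distrib, Finset.sum_add_distrib, ← Finset.mul_sum,
            Finset.sum_ite_eq' Finset.univ a, Finset.sum_ite_eq' Finset.univ b]
          simp
      _ = ((s : ℝ) ^ 2 - 2) / (2 * (s : ℝ) ^ 2) := by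
          have hca : c a = 0 := by rw [hc a]; simp [ha]
          have hcb : c b = 1 := by
            rw [hc b]
            have : ((b : ℕ) : ℝ) = (s : ℝ) - 1 := by
              simp [hb]
              push_cast [Nat.cast_sub (by omega : 1 ≤ s)]
              ring
            rw [this]
            field_simp
          have hsc : ∑ j : Fin s, c j = (s : ℝ) / 2 := by
            calc ∑ j : Fin s, c j = ∑ j : Fin s, (j : ℝ) / ((s : ℝ) - 1) := by
                  exact Finset.sum_congr rfl (fun j _ => hc j)
              _ = (∑ j : Fin s, (j : ℝ)) / ((s : ℝ) - 1) := by
                  rw [Finset.sum_div]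
              _ = (s : ℝ) / 2 := by rw [hsumj]; field_simp
          rw [hca, hcb, hsc]
          field_simp
          ring
  · intro h
    have h2 : (s : ℝ) ^ 2 - 2 = (s : ℝ) ^ 2 := by
      have hne2 : (2 : ℝ) * (s : ℝ) ^ 2 ≠ 0 := by positivity
      field_simp at h
      linarith
    linarith
end

section
/- The embedded weight vector b̃₂ = (1/4, 1/4, 1/4, 1/4)ᵀ for the SSPERK(4,3) method satisfies the second-order conditions b̃₂ᵀe = 1 and b̃₂ᵀc = 1/2, and violates both third-order conditions: b̃₂ᵀc² = 3/8 ≠ 1/3 and b̃₂ᵀ(c²/2 − Ac) = 1/16 ≠ 0, where c = (0, 1/2, 1, 1/2)ᵀ and A is the SSPERK(4,3) coefficient matrix. Hence b̃₂ is a non-defective second-order embedded method for SSPERK(4,3). -/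
open Matrix

/-- Coefficient matrix of the optimal SSPERK(4,3) method. -/
noncomputable def A43 : Matrix (Fin 4) (Fin 4) ℝ :=
  !![0, 0, 0, 0;
     1/2, 0, 0, 0;
     1/2, 1/2, 0, 0;
     1/6, 1/6, 1/6, 0]

/-- Abscissae of the optimal SSPERK(4,3) method, `c = A·e`. -/
noncomputable def c43 : Fin 4 → ℝ := ![0, 1/2, 1, 1/2]

/-- Embedded weights `b̃₂ = (1/4, 1/4, 1/4, 1/4)ᵀ` for SSPERK(4,3). -/
noncomputable def bt2 : Fin 4 → ℝ := ![1/4, 1/4, 1/4, 1/4]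

/-- The embedded weight vector `b̃₂ = (1/4, 1/4, 1/4, 1/4)ᵀ` for SSPERK(4,3)
satisfies the second-order conditions `b̃₂ᵀe = 1`, `b̃₂ᵀc = 1/2` and violates both
third-order conditions: `b̃₂ᵀc² = 3/8 ≠ 1/3` and `b̃₂ᵀ(c²/2 − Ac) = 1/16 ≠ 0`;
hence `b̃₂` is a non-defective second-order embedded method. -/
theorem ssperk43_embedded_b2_nondefective_second_order :
    (∑ j : Fin 4, bt2 j = 1) ∧
    (∑ j : Fin 4, bt2 j * c43 j = 1 / 2) ∧
    (∑ j : Fin 4, bt2 j * (c43 j) ^ 2 = 3 / 8) ∧ ((3 : ℝ) / 8 ≠ 1 / 3) ∧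
    (∑ j : Fin 4, bt2 j * ((c43 j) ^ 2 / 2 - A43.mulVec c43 j) = 1 / 16) ∧
    ((1 : ℝ) / 16 ≠ 0) := by
  refine ⟨?_, ?_, ?_, by norm_num, ?_, by norm_num⟩ <;>
    simp [Fin.sum_univ_four, bt2, c43, A43, Matrix.mulVec, dotProduct,
      Fin.sum_univ_four] <;> norm_num
end
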